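/- Assume N ≥ 4 and let U be any N×N unitary matrix. Then the Shannon entropy of the probability vector Q = (R_1, R_2−R_1, …, R_N−R_{N−1}) satisfies H(Q) ≤ (3/4)·ln(N−1) + (1/4)·ln 4 + (3/4)·ln(4/3). -/

import Mathlib

open MeasureTheory

/-- The measurable space structure on matrices (the product σ-algebra, which coincides with the
Borel σ-algebra). -/
instance {m n α : Type*} [MeasurableSpace α] : MeasurableSpace (Matrix m n α) :=
  inferInstanceAs (MeasurableSpace (m → n → α))

/-- The operator norm (largest singular value) of a rectangular complex matrix, i.e. the norm of
the induced linear map between Euclidean spaces. -/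
noncomputable def opNorm {m n : Type*} [Fintype m] [Fintype n] [DecidableEq n]
    (M : Matrix m n ℂ) : ℝ :=
  ‖LinearMap.toContinuousLinearMap (Matrix.toEuclideanLin M)‖

/-- `‖Û^(n,m)‖`: the maximal operator norm of an `n × m` submatrix of the `N × N` matrix `U`,
the maximum being taken over all choices of `n` rows and `m` columns. -/
noncomputable def maxSubNorm (N n m : ℕ) (U : Matrix (Fin N) (Fin N) ℂ) : ℝ :=
  ⨆ f : Fin n ↪ Fin N, ⨆ g : Fin m ↪ Fin N, opNorm (U.submatrix f g)

/-- `s_k = max{‖Û^(1,k)‖, ‖Û^(2,k−1)‖, …, ‖Û^(k,1)‖}`, the maximal operator norm of a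
submatrix of `U` with `n + m = k + 1` rows and columns (`n, m ≥ 1`).  By convention `s_0 = 0`
(the supremum over the empty range). -/
noncomputable def sk (N : ℕ) (U : Matrix (Fin N) (Fin N) ℂ) (k : ℕ) : ℝ :=
  ⨆ a : Fin k, maxSubNorm N (a.1 + 1) (k - a.1) U

/-- `R_k = ((1 + s_k)/2)²` for `1 ≤ k ≤ N`, with the convention `R_0 = 0`, so that the vector
`Q = (R_1, R_2 − R_1, …, R_N − R_{N−1})` is given by `Q_k = R_k − R_{k−1}`. -/
noncomputable def Rcoef (N : ℕ) (U : Matrix (Fin N) (Fin N) ℂ) (k : ℕ) : ℝ :=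
  if k = 0 then 0 else ((1 + sk N U k) / 2) ^ 2

/-- The vector `Q = (R_1, R_2 − R_1, …, R_N − R_{N−1})`, indexed by `i : Fin N`
(so `Q i = R_{i+1} − R_i`). -/
noncomputable def Qvec (N : ℕ) (U : Matrix (Fin N) (Fin N) ℂ) (i : Fin N) : ℝ :=
  Rcoef N U (i.1 + 1) - Rcoef N U i.1

/-! ### Auxiliary lemmas on operator norms of matrices -/

open Matrix in
lemma opNorm_nonneg' {m n : Type*} [Fintype m] [Fintype n] [DecidableEq n]
    (M : Matrix m n ℂ) : 0 ≤ opNorm M := norm_nonneg _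

lemma euclid_norm_eq {c : ℕ} (w : Fin c → ℂ) :
    ‖(WithLp.equiv 2 (Fin c → ℂ)).symm w‖ = Real.sqrt (∑ i, ‖w i‖ ^ 2) := by
  rw [EuclideanSpace.norm_eq]
  simp

open Matrix in
lemma sqrt_sum_mulVec_le {a b : ℕ} (M : Matrix (Fin a) (Fin b) ℂ) (v : Fin b → ℂ) :
    Real.sqrt (∑ i, ‖(M *ᵥ v) i‖ ^ 2) ≤ opNorm M * Real.sqrt (∑ j, ‖v j‖ ^ 2) := by
  have h := (LinearMap.toContinuousLinearMap (Matrix.toEuclideanLin M)).le_opNorm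
    ((WithLp.equiv 2 (Fin b → ℂ)).symm v)
  have happ : (LinearMap.toContinuousLinearMap (Matrix.toEuclideanLin M))
      ((WithLp.equiv 2 (Fin b → ℂ)).symm v) = (WithLp.equiv 2 (Fin a → ℂ)).symm (M *ᵥ v) := rfl
  rw [happ, euclid_norm_eq, euclid_norm_eq] at h
  exact h

open Matrix in
lemma opNorm_le_of_forall {a b : ℕ} (M : Matrix (Fin a) (Fin b) ℂ) {C : ℝ} (hC : 0 ≤ C)
    (h : ∀ v : Fin b → ℂ,
      Real.sqrt (∑ i, ‖(M *ᵥ v) i‖ ^ 2) ≤ C * Real.sqrt (∑ j, ‖v j‖ ^ 2)) :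
    opNorm M ≤ C := by
  show ‖LinearMap.toContinuousLinearMap (Matrix.toEuclideanLin M)‖ ≤ C
  refine ContinuousLinearMap.opNorm_le_bound _ hC fun x => ?_
  have h2 := h ((WithLp.equiv 2 (Fin b → ℂ)) x)
  have hx : (WithLp.equiv 2 (Fin b → ℂ)).symm ((WithLp.equiv 2 (Fin b → ℂ)) x) = x :=
    (WithLp.equiv 2 (Fin b → ℂ)).symm_apply_apply x
  rw [← hx]
  have happ : (LinearMap.toContinuousLinearMap (Matrix.toEuclideanLin M))
      ((WithLp.equiv 2 (Fin b → ℂ)).symm ((WithLp.equiv 2 (Fin b → ℂ)) x))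
      = (WithLp.equiv 2 (Fin a → ℂ)).symm (M *ᵥ ((WithLp.equiv 2 (Fin b → ℂ)) x)) := rfl
  rw [happ, euclid_norm_eq, euclid_norm_eq]
  exact h2

open Matrix in
lemma opNorm_submatrix_le {p q n m : ℕ} (M : Matrix (Fin p) (Fin q) ℂ)
    (f : Fin n → Fin p) (g : Fin m → Fin q)
    (hf : Function.Injective f) (hg : Function.Injective g) :
    opNorm (M.submatrix f g) ≤ opNorm M := by
  refine opNorm_le_of_forall _ (opNorm_nonneg' M) fun v => ?_
  set v' : Fin q → ℂ := Function.extend g v 0 with hv'def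
  have hmv : ∀ i, ((M.submatrix f g) *ᵥ v) i = (M *ᵥ v') (f i) := by
    intro i
    simp only [Matrix.mulVec, dotProduct, Matrix.submatrix_apply]
    have h1 : ∑ j : Fin q, M (f i) j * v' j
        = ∑ j ∈ Finset.univ.image g, M (f i) j * v' j := by
      symm
      refine Finset.sum_subset (Finset.subset_univ _) fun j _ hj => ?_
      have hj' : ¬∃ k, g k = j := by simpa [Finset.mem_image] using hj
      have : v' j = 0 := by
        rw [hv'def, Function.extend_apply' _ _ _ hj']; rfl
      simp [this]
    rw [h1, Finset.sum_image (fun a _ b _ h => hg h)]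
    refine Finset.sum_congr rfl fun k _ => ?_
    rw [hv'def, hg.extend_apply]
  have hnv : ∑ j : Fin q, ‖v' j‖ ^ 2 = ∑ k : Fin m, ‖v k‖ ^ 2 := by
    have h1 : ∑ j : Fin q, ‖v' j‖ ^ 2 = ∑ j ∈ Finset.univ.image g, ‖v' j‖ ^ 2 := by
      symm
      refine Finset.sum_subset (Finset.subset_univ _) fun j _ hj => ?_
      have hj' : ¬∃ k, g k = j := by simpa [Finset.mem_image] using hj
      have : v' j = 0 := by
        rw [hv'def, Function.extend_apply' _ _ _ hj']; rfl
      simp [this]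
    rw [h1, Finset.sum_image (fun a _ b _ h => hg h)]
    refine Finset.sum_congr rfl fun k _ => ?_
    rw [hv'def, hg.extend_apply]
  have hrow : ∑ i : Fin n, ‖(M *ᵥ v') (f i)‖ ^ 2 ≤ ∑ j : Fin p, ‖(M *ᵥ v') j‖ ^ 2 := by
    have himg : ∑ j ∈ Finset.univ.image f, ‖(M *ᵥ v') j‖ ^ 2
        = ∑ i : Fin n, ‖(M *ᵥ v') (f i)‖ ^ 2 :=
      Finset.sum_image (fun a _ b _ h => hf h)
    rw [← himg]
    exact Finset.sum_le_sum_of_subset_of_nonneg (Finset.subset_univ _)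
      (fun j _ _ => by positivity)
  calc Real.sqrt (∑ i, ‖((M.submatrix f g) *ᵥ v) i‖ ^ 2)
      = Real.sqrt (∑ i, ‖(M *ᵥ v') (f i)‖ ^ 2) := by
        congr 1; exact Finset.sum_congr rfl fun i _ => by rw [hmv]
    _ ≤ Real.sqrt (∑ j : Fin p, ‖(M *ᵥ v') j‖ ^ 2) := Real.sqrt_le_sqrt hrow
    _ ≤ opNorm M * Real.sqrt (∑ j, ‖v' j‖ ^ 2) := sqrt_sum_mulVec_le M v'
    _ = opNorm M * Real.sqrt (∑ k, ‖v k‖ ^ 2) := by rw [hnv]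

open Matrix in
lemma star_dotProduct_self (q : ℕ) (w : Fin q → ℂ) :
    star w ⬝ᵥ w = ((∑ i, ‖w i‖ ^ 2 : ℝ) : ℂ) := by
  simp only [dotProduct, Pi.star_apply]
  push_cast
  refine Finset.sum_congr rfl fun i _ => ?_
  rw [mul_comm, Complex.star_def, Complex.mul_conj]
  rw [← Complex.sq_norm]
  norm_cast

open Matrix in
lemma opNorm_unitary_le {N : ℕ} (U : Matrix (Fin N) (Fin N) ℂ)
    (hU : U ∈ Matrix.unitaryGroup (Fin N) ℂ) : opNorm U ≤ 1 := by
  refine opNorm_le_of_forall _ zero_le_one fun v => ?_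
  rw [one_mul]
  have key : ∑ i, ‖(U *ᵥ v) i‖ ^ 2 = ∑ j, ‖v j‖ ^ 2 := by
    have h1 : star (U *ᵥ v) ⬝ᵥ (U *ᵥ v) = star v ⬝ᵥ v := by
      rw [Matrix.star_mulVec, ← Matrix.dotProduct_mulVec, Matrix.mulVec_mulVec]
      have : Uᴴ * U = 1 := by
        have := hU.1
        rwa [Matrix.star_eq_conjTranspose] at this
      rw [this, Matrix.one_mulVec]
    have h2 := star_dotProduct_self N (U *ᵥ v)
    have h3 := star_dotProduct_self N v
    rw [h2, h3] at h1
    exact_mod_cast h1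
  rw [key]

open Matrix in
lemma opNorm_submatrix_unitary_le {N n m : ℕ} (U : Matrix (Fin N) (Fin N) ℂ)
    (hU : U ∈ Matrix.unitaryGroup (Fin N) ℂ) (f : Fin n ↪ Fin N) (g : Fin m ↪ Fin N) :
    opNorm (U.submatrix f g) ≤ 1 :=
  (opNorm_submatrix_le U f g f.injective g.injective).trans (opNorm_unitary_le U hU)

/-! ### Properties of `maxSubNorm`, `sk`, `Rcoef` -/

lemma maxSubNorm_nonneg (N n m : ℕ) (U : Matrix (Fin N) (Fin N) ℂ) :
    0 ≤ maxSubNorm N n m U :=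
  Real.iSup_nonneg fun _ => Real.iSup_nonneg fun _ => opNorm_nonneg' _

lemma maxSubNorm_le_one {N : ℕ} (n m : ℕ) (U : Matrix (Fin N) (Fin N) ℂ)
    (hU : U ∈ Matrix.unitaryGroup (Fin N) ℂ) : maxSubNorm N n m U ≤ 1 :=
  Real.iSup_le (fun f => Real.iSup_le
    (fun g => opNorm_submatrix_unitary_le U hU f g) zero_le_one) zero_le_one

lemma le_maxSubNorm {N n m : ℕ} (U : Matrix (Fin N) (Fin N) ℂ)
    (hU : U ∈ Matrix.unitaryGroup (Fin N) ℂ) (f : Fin n ↪ Fin N) (g : Fin m ↪ Fin N) :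
    opNorm (U.submatrix f g) ≤ maxSubNorm N n m U := by
  have hbdd1 : BddAbove (Set.range fun g' : Fin m ↪ Fin N => opNorm (U.submatrix f g')) :=
    ⟨1, by rintro _ ⟨g', rfl⟩; exact opNorm_submatrix_unitary_le U hU f g'⟩
  have hbdd2 : BddAbove (Set.range fun f' : Fin n ↪ Fin N =>
      ⨆ g' : Fin m ↪ Fin N, opNorm (U.submatrix f' g')) := by
    refine ⟨1, ?_⟩
    rintro _ ⟨f', rfl⟩
    exact Real.iSup_le (fun g' => opNorm_submatrix_unitary_le U hU f' g') zero_le_one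
  exact le_ciSup_of_le hbdd2 f (le_ciSup hbdd1 g)

lemma sk_nonneg (N : ℕ) (U : Matrix (Fin N) (Fin N) ℂ) (k : ℕ) : 0 ≤ sk N U k :=
  Real.iSup_nonneg fun _ => maxSubNorm_nonneg _ _ _ _

lemma sk_le_one {N : ℕ} (U : Matrix (Fin N) (Fin N) ℂ)
    (hU : U ∈ Matrix.unitaryGroup (Fin N) ℂ) (k : ℕ) : sk N U k ≤ 1 :=
  Real.iSup_le (fun _ => maxSubNorm_le_one _ _ U hU) zero_le_one

/-- Adding one more column can only increase the maximal submatrix norm. -/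
lemma maxSubNorm_le_succ {N n m : ℕ} (U : Matrix (Fin N) (Fin N) ℂ)
    (hU : U ∈ Matrix.unitaryGroup (Fin N) ℂ) (hm : m < N) :
    maxSubNorm N n m U ≤ maxSubNorm N n (m + 1) U := by
  refine Real.iSup_le (fun f => Real.iSup_le (fun g => ?_) (maxSubNorm_nonneg _ _ _ _))
    (maxSubNorm_nonneg _ _ _ _)
  -- find an element not in the range of g
  have hns : ¬Function.Surjective g := by
    intro hs
    have := Fintype.card_le_of_surjective _ hs
    simp only [Fintype.card_fin] at this
    omega
  rw [Function.Surjective] at hns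
  push_neg at hns
  obtain ⟨j, hj⟩ := hns
  have hinj : Function.Injective (Fin.snoc (⇑g) j : Fin (m + 1) → Fin N) := by
    intro i₁ i₂ h
    rcases Fin.eq_castSucc_or_eq_last i₁ with ⟨j₁, rfl⟩ | rfl <;>
      rcases Fin.eq_castSucc_or_eq_last i₂ with ⟨j₂, rfl⟩ | rfl
    · simp only [Fin.snoc_castSucc] at h
      rw [g.injective h]
    · simp only [Fin.snoc_castSucc, Fin.snoc_last] at h
      exact (hj j₁ h).elim
    · simp only [Fin.snoc_castSucc, Fin.snoc_last] at h
      exact (hj j₂ h.symm).elim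
    · rfl
  set g' : Fin (m + 1) ↪ Fin N := ⟨Fin.snoc (⇑g) j, hinj⟩ with hg'def
  have hcomp : U.submatrix (⇑f) (⇑g) = (U.submatrix (⇑f) (⇑g')).submatrix id Fin.castSucc := by
    rw [Matrix.submatrix_submatrix]
    set_option linter.unusedTactic false in
    congr 1
    funext k
    simp [hg'def, Fin.snoc_castSucc]
  calc opNorm (U.submatrix (⇑f) (⇑g))
      = opNorm ((U.submatrix (⇑f) (⇑g')).submatrix id Fin.castSucc) := by rw [hcomp]
    _ ≤ opNorm (U.submatrix (⇑f) (⇑g')) :=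
        opNorm_submatrix_le _ _ _ Function.injective_id (Fin.castSucc_injective m)
    _ ≤ maxSubNorm N n (m + 1) U := le_maxSubNorm U hU f g'

lemma sk_le_succ {N k : ℕ} (U : Matrix (Fin N) (Fin N) ℂ)
    (hU : U ∈ Matrix.unitaryGroup (Fin N) ℂ) (hk : k + 1 ≤ N) :
    sk N U k ≤ sk N U (k + 1) := by
  refine Real.iSup_le (fun a => ?_) (sk_nonneg _ _ _)
  have ha : a.1 < k := a.2
  have h1 : maxSubNorm N (a.1 + 1) (k - a.1) U ≤ maxSubNorm N (a.1 + 1) ((k - a.1) + 1) U :=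
    maxSubNorm_le_succ U hU (by omega)
  have h2 : maxSubNorm N (a.1 + 1) ((k - a.1) + 1) U ≤ sk N U (k + 1) := by
    have hbdd : BddAbove (Set.range fun a' : Fin (k + 1) =>
        maxSubNorm N (a'.1 + 1) ((k + 1) - a'.1) U) :=
      ⟨1, by rintro _ ⟨a', rfl⟩; exact maxSubNorm_le_one _ _ U hU⟩
    have := le_ciSup hbdd (⟨a.1, by omega⟩ : Fin (k + 1))
    simpa [sk, show (k + 1) - a.1 = (k - a.1) + 1 by omega] using this
  exact h1.trans h2

lemma Rcoef_le_one {N : ℕ} (U : Matrix (Fin N) (Fin N) ℂ)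
    (hU : U ∈ Matrix.unitaryGroup (Fin N) ℂ) (k : ℕ) : Rcoef N U k ≤ 1 := by
  unfold Rcoef
  split
  · norm_num
  · have h1 := sk_nonneg N U k
    have h2 := sk_le_one U hU k
    nlinarith

lemma Rcoef_mono {N k : ℕ} (U : Matrix (Fin N) (Fin N) ℂ)
    (hU : U ∈ Matrix.unitaryGroup (Fin N) ℂ) (hk : k + 1 ≤ N) :
    Rcoef N U k ≤ Rcoef N U (k + 1) := by
  rcases Nat.eq_zero_or_pos k with rfl | hk0
  · simp only [Rcoef, if_pos rfl, if_neg (Nat.one_ne_zero)]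
    positivity
  · rw [show Rcoef N U k = ((1 + sk N U k) / 2) ^ 2 by simp [Rcoef, Nat.pos_iff_ne_zero.mp hk0],
      show Rcoef N U (k + 1) = ((1 + sk N U (k + 1)) / 2) ^ 2 by simp [Rcoef]]
    have h1 := sk_nonneg N U k
    have h2 := sk_le_succ U hU hk
    nlinarith

lemma Qvec_nonneg {N : ℕ} (U : Matrix (Fin N) (Fin N) ℂ)
    (hU : U ∈ Matrix.unitaryGroup (Fin N) ℂ) (i : Fin N) : 0 ≤ Qvec N U i :=
  sub_nonneg.mpr (Rcoef_mono U hU i.2)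

/-! ### Analytic lemmas -/

lemma one_le_log_four : 1 ≤ Real.log 4 := by
  rw [Real.le_log_iff_exp_le (by norm_num : (0:ℝ) < 4)]
  exact (Real.exp_one_lt_d9.le).trans (by norm_num)

lemma negMulLog_monoOn : MonotoneOn Real.negMulLog (Set.Icc (0:ℝ) (1/4)) := by
  refine monotoneOn_of_deriv_nonneg (convex_Icc _ _)
    Real.continuous_negMulLog.continuousOn
    (fun x hx => ?_) (fun x hx => ?_)
  · rw [interior_Icc] at hx
    exact ((Real.hasDerivAt_negMulLog (ne_of_gt hx.1)).differentiableAt).differentiableWithinAt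
  · rw [interior_Icc] at hx
    rw [(Real.hasDerivAt_negMulLog (ne_of_gt hx.1)).deriv]
    have h1 : Real.log x < Real.log (1/4) := Real.log_lt_log hx.1 hx.2
    have h2 : Real.log (1/4) = -Real.log 4 := by
      rw [show (1/4 : ℝ) = 4⁻¹ by norm_num, Real.log_inv]
    have := one_le_log_four
    linarith

/-- The one-variable bound: for `q ∈ [1/4, 1]` and `c = N - 1 ≥ 3`, the function
`G q = negMulLog q + c * negMulLog ((1-q)/c)` is antitone. -/
lemma G_antitoneOn {c : ℝ} (hc : 3 ≤ c) :
    AntitoneOn (fun q => Real.negMulLog q + c * Real.negMulLog ((1 - q) / c))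
      (Set.Icc (1/4 : ℝ) 1) := by
  have hc0 : (0:ℝ) < c := by linarith
  have hG : ∀ x ∈ interior (Set.Icc (1/4 : ℝ) 1),
      HasDerivAt (fun q => Real.negMulLog q + c * Real.negMulLog ((1 - q) / c))
        (Real.log ((1 - x) / c) - Real.log x) x := by
    intro x hx
    rw [interior_Icc] at hx
    have hx0 : x ≠ 0 := by have := hx.1; intro h; rw [h] at this; norm_num at this
    have hu0 : (1 - x) / c ≠ 0 := by
      have h1x : 0 < 1 - x := by linarith [hx.2]
      positivity
    have hinner : HasDerivAt (fun y : ℝ => (1 - y) / c) (-1 / c) x := by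
      have h := ((hasDerivAt_id x).const_sub 1).div_const c
      simpa using h
    have h2 := (Real.hasDerivAt_negMulLog hu0).comp x hinner
    have h3 := h2.const_mul c
    have h1 := Real.hasDerivAt_negMulLog hx0
    refine HasDerivAt.congr_deriv (h1.add h3) ?_
    field_simp
    ring
  refine antitoneOn_of_deriv_nonpos (convex_Icc _ _) ?_ (fun x hx => ?_) (fun x hx => ?_)
  · have hcont1 : Continuous fun q : ℝ => (1 - q) / c := by continuity
    have : Continuous (fun q => Real.negMulLog q + c * Real.negMulLog ((1 - q) / c)) :=
      Real.continuous_negMulLog.add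
        (continuous_const.mul (Real.continuous_negMulLog.comp hcont1))
    exact this.continuousOn
  · exact ((hG x hx).differentiableAt).differentiableWithinAt
  · rw [(hG x hx).deriv]
    rw [interior_Icc] at hx
    have hx14 : 1/4 < x := hx.1
    have hx1 : x < 1 := hx.2
    have hu0 : 0 < (1 - x) / c := by
      have : (0:ℝ) < 1 - x := by linarith
      positivity
    have hux : (1 - x) / c ≤ x := by
      rw [div_le_iff₀ (by linarith : (0:ℝ) < c)]
      nlinarith
    have := Real.log_le_log hu0 hux
    linarith

theorem entropy_Q_upper_bound
    (N : ℕ) (hN : 4 ≤ N) (U : Matrix (Fin N) (Fin N) ℂ)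
    (hU : U ∈ Matrix.unitaryGroup (Fin N) ℂ) :
    ∑ i : Fin N, Real.negMulLog (Qvec N U i) ≤
      3 / 4 * Real.log ((N : ℝ) - 1) + 1 / 4 * Real.log 4 + 3 / 4 * Real.log (4 / 3) := by
  haveI : NeZero N := ⟨by omega⟩
  set c : ℝ := (N : ℝ) - 1 with hc
  have hNR : (4 : ℝ) ≤ (N : ℝ) := by exact_mod_cast hN
  have hc3 : 3 ≤ c := by rw [hc]; linarith
  have hc0 : (0 : ℝ) < c := by linarith
  have hp0 : ∀ i, 0 ≤ Qvec N U i := Qvec_nonneg U hU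
  have hq_eq : Qvec N U (0 : Fin N) = Rcoef N U 1 := by
    simp [Qvec, Rcoef]
  have hq14 : 1 / 4 ≤ Qvec N U 0 := by
    rw [hq_eq]
    unfold Rcoef
    rw [if_neg one_ne_zero]
    have := sk_nonneg N U 1
    nlinarith
  have hq1 : Qvec N U 0 ≤ 1 := by rw [hq_eq]; exact Rcoef_le_one U hU 1
  have hsum : ∑ i : Fin N, Qvec N U i = Rcoef N U N := by
    have h1 : ∑ i : Fin N, Qvec N U i
        = ∑ i ∈ Finset.range N, (Rcoef N U (i + 1) - Rcoef N U i) := by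
      unfold Qvec
      exact Fin.sum_univ_eq_sum_range (fun i => Rcoef N U (i + 1) - Rcoef N U i) N
    rw [h1, Finset.sum_range_sub (fun i => Rcoef N U i)]
    simp [Rcoef]
  have hsum_le : ∑ i : Fin N, Qvec N U i ≤ 1 := by
    rw [hsum]; exact Rcoef_le_one U hU N
  set T : ℝ := ∑ i ∈ Finset.univ.erase (0 : Fin N), Qvec N U i with hTdef
  have hsplit : Qvec N U 0 + T = ∑ i : Fin N, Qvec N U i :=
    Finset.add_sum_erase _ _ (Finset.mem_univ 0)
  have hT0 : 0 ≤ T := Finset.sum_nonneg fun i _ => hp0 i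
  have hT : T ≤ 1 - Qvec N U 0 := by linarith
  have hcardR : (((Finset.univ.erase (0 : Fin N)).card : ℕ) : ℝ) = c := by
    rw [Finset.card_erase_of_mem (Finset.mem_univ _), Finset.card_univ, Fintype.card_fin]
    rw [Nat.cast_sub (by omega : 1 ≤ N)]
    simp [hc]
  have jensen := Real.concaveOn_negMulLog.le_map_sum (t := Finset.univ.erase (0 : Fin N))
    (w := fun _ => 1 / c) (p := fun i => Qvec N U i)
    (fun i _ => by positivity)
    (by rw [Finset.sum_const, nsmul_eq_mul, hcardR]; field_simp)
    (fun i _ => hp0 i)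
  have hJ1 : ∑ i ∈ Finset.univ.erase (0 : Fin N), (1 / c) • Real.negMulLog (Qvec N U i)
      = (1 / c) * ∑ i ∈ Finset.univ.erase (0 : Fin N), Real.negMulLog (Qvec N U i) := by
    simp only [smul_eq_mul, Finset.mul_sum]
  have hJ2 : ∑ i ∈ Finset.univ.erase (0 : Fin N), (1 / c) • Qvec N U i = T / c := by
    simp only [smul_eq_mul]
    rw [← Finset.mul_sum, ← hTdef]
    ring
  rw [hJ1, hJ2] at jensen
  have hS : ∑ i ∈ Finset.univ.erase (0 : Fin N), Real.negMulLog (Qvec N U i)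
      ≤ c * Real.negMulLog (T / c) := by
    have h := mul_le_mul_of_nonneg_left jensen hc0.le
    calc ∑ i ∈ Finset.univ.erase (0 : Fin N), Real.negMulLog (Qvec N U i)
        = c * ((1 / c) * ∑ i ∈ Finset.univ.erase (0 : Fin N), Real.negMulLog (Qvec N U i)) := by
          field_simp
      _ ≤ c * Real.negMulLog (T / c) := h
  have hub : (1 - Qvec N U 0) / c ≤ 1 / 4 := by
    rw [div_le_iff₀ hc0]
    nlinarith
  have hq1' : 0 ≤ 1 - Qvec N U 0 := by linarith
  have hdiv : T / c ≤ (1 - Qvec N U 0) / c := div_le_div_of_nonneg_right hT hc0.le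
  have hmono : Real.negMulLog (T / c) ≤ Real.negMulLog ((1 - Qvec N U 0) / c) := by
    refine negMulLog_monoOn ⟨div_nonneg hT0 hc0.le, le_trans hdiv hub⟩
      ⟨div_nonneg hq1' hc0.le, hub⟩ hdiv
  have hGle : Real.negMulLog (Qvec N U 0) + c * Real.negMulLog ((1 - Qvec N U 0) / c)
      ≤ Real.negMulLog (1 / 4) + c * Real.negMulLog ((1 - 1 / 4) / c) :=
    G_antitoneOn hc3 ⟨le_refl _, by norm_num⟩ ⟨hq14, hq1⟩ hq14
  have hfinal : Real.negMulLog (1 / 4) + c * Real.negMulLog ((1 - 1 / 4) / c)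
      = 3 / 4 * Real.log c + 1 / 4 * Real.log 4 + 3 / 4 * Real.log (4 / 3) := by
    simp only [Real.negMulLog]
    rw [show ((1 : ℝ) - 1 / 4) = 3 / 4 by norm_num]
    rw [Real.log_div (by norm_num : (3 / 4 : ℝ) ≠ 0) (ne_of_gt hc0)]
    rw [show (1 / 4 : ℝ) = 4⁻¹ by norm_num, Real.log_inv]
    rw [show (3 / 4 : ℝ) = 3 / 4 from rfl,
      Real.log_div (by norm_num : (3 : ℝ) ≠ 0) (by norm_num : (4 : ℝ) ≠ 0),
      Real.log_div (by norm_num : (4 : ℝ) ≠ 0) (by norm_num : (3 : ℝ) ≠ 0)]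
    field_simp
    ring
  calc ∑ i : Fin N, Real.negMulLog (Qvec N U i)
      = Real.negMulLog (Qvec N U 0)
        + ∑ i ∈ Finset.univ.erase (0 : Fin N), Real.negMulLog (Qvec N U i) :=
        (Finset.add_sum_erase _ _ (Finset.mem_univ 0)).symm
    _ ≤ Real.negMulLog (Qvec N U 0) + c * Real.negMulLog (T / c) := by linarith
    _ ≤ Real.negMulLog (Qvec N U 0) + c * Real.negMulLog ((1 - Qvec N U 0) / c) := by
        nlinarith [mul_le_mul_of_nonneg_left hmono hc0.le]
    _ ≤ Real.negMulLog (1 / 4) + c * Real.negMulLog ((1 - 1 / 4) / c) := hGle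
    _ = 3 / 4 * Real.log c + 1 / 4 * Real.log 4 + 3 / 4 * Real.log (4 / 3) := hfinal
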